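/- Single-layer version of Corollary 1: let f(p) = w^T ν(W p + b) + c with ReLU ν, where W ∈ ℝ^{m×3} has i.i.d. N(0, 2/m) entries, w = sqrt(π/m)·𝟙, b = -W t̄, c = -r̄. Then as m → ∞, f(p) converges in probability to ‖p - t̄‖ - r̄ for each fixed p. -/

import Mathlib

open MeasureTheory ProbabilityTheory Filter Real Set
open scoped NNReal ENNReal

lemma aux_integral_Ioi_mul_exp {b : ℝ} (hb : 0 < b) :
    ∫ x in Ioi (0:ℝ), x * Real.exp (-b * x ^ 2) = (2 * b)⁻¹ := by
  have A : ∀ x : ℝ, HasDerivAt (fun y => -(2*b)⁻¹ * Real.exp (-b * y^2))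
      (x * Real.exp (-b * x^2)) x := by
    intro x
    refine HasDerivAt.congr_deriv (((hasDerivAt_pow 2 x).const_mul (-b)).exp.const_mul (-(2*b)⁻¹)) ?_
    field_simp
    ring
  have B : Tendsto (fun y : ℝ => -(2*b)⁻¹ * Real.exp (-b * y^2)) atTop
      (nhds (-(2*b)⁻¹ * 0)) := by
    refine Tendsto.const_mul _ ?_
    refine Real.tendsto_exp_atBot.comp ?_
    exact (tendsto_pow_atTop two_ne_zero).const_mul_atTop_of_neg (neg_lt_zero.2 hb)
  have := integral_Ioi_of_hasDerivAt_of_tendsto' (a := 0) (fun x _ => A x)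
    (integrable_mul_exp_neg_mul_sq hb).integrableOn B
  simpa using this

lemma aux_exp_conv {u w : ℝ} (hu : 0 < u) (hw : 0 < w) (Z : ℝ) :
    ∫ x : ℝ, Real.exp (-x^2 / (2*u)) * Real.exp (-(Z - x)^2 / (2*w))
      = Real.sqrt (π / ((u+w)/(2*u*w))) * Real.exp (-Z^2 / (2*(u+w))) := by
  have huw : (0:ℝ) < u + w := by linarith
  have key : ∀ x : ℝ, Real.exp (-x^2 / (2*u)) * Real.exp (-(Z - x)^2 / (2*w))
      = Real.exp (-Z^2 / (2*(u+w))) *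
        Real.exp (-((u+w)/(2*u*w)) * (x - u*Z/(u+w))^2) := by
    intro x
    rw [← Real.exp_add, ← Real.exp_add]
    congr 1
    field_simp
    ring
  simp_rw [key]
  rw [integral_const_mul,
    integral_sub_right_eq_self (fun x => Real.exp (-((u+w)/(2*u*w)) * x^2)) (u*Z/(u+w)),
    integral_gaussian]
  ring

lemma aux_const_id {u w : ℝ} (hu : 0 < u) (hw : 0 < w) :
    (Real.sqrt (2*π*u))⁻¹ * (Real.sqrt (2*π*w))⁻¹ * Real.sqrt (π / ((u+w)/(2*u*w)))
      = (Real.sqrt (2*π*(u+w)))⁻¹ := by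
  have hπ := Real.pi_pos
  have huw : (0:ℝ) < u + w := by linarith
  rw [← Real.sqrt_inv, ← Real.sqrt_inv, ← Real.sqrt_mul (by positivity),
    ← Real.sqrt_mul (by positivity), ← Real.sqrt_inv]
  congr 1
  field_simp

lemma aux_pdf_conv (a b : ℝ) {u w : ℝ≥0} (hu : u ≠ 0) (hw : w ≠ 0) (z : ℝ) :
    ∫ x : ℝ, gaussianPDFReal a u x * gaussianPDFReal b w (z - x)
      = gaussianPDFReal (a + b) (u + w) z := by
  have hu' : (0:ℝ) < u := lt_of_le_of_ne u.coe_nonneg (by exact_mod_cast (Ne.symm hu))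
  have hw' : (0:ℝ) < w := lt_of_le_of_ne w.coe_nonneg (by exact_mod_cast (Ne.symm hw))
  simp only [gaussianPDFReal]
  have h1 : ∀ x : ℝ,
      (Real.sqrt (2*π*u))⁻¹ * Real.exp (-(x-a)^2 / (2*u)) *
        ((Real.sqrt (2*π*w))⁻¹ * Real.exp (-((z-x)-b)^2 / (2*w)))
      = (Real.sqrt (2*π*u))⁻¹ * (Real.sqrt (2*π*w))⁻¹ *
        (Real.exp (-(x-a)^2 / (2*u)) * Real.exp (-((z-a-b) - (x-a))^2 / (2*w))) := by
    intro x; ring_nf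
  simp_rw [h1, integral_const_mul]
  have h2 : ∫ x : ℝ, Real.exp (-(x-a)^2 / (2*(u:ℝ))) *
      Real.exp (-((z-a-b) - (x-a))^2 / (2*(w:ℝ)))
      = ∫ x : ℝ, Real.exp (-x^2 / (2*(u:ℝ))) * Real.exp (-((z-a-b) - x)^2 / (2*(w:ℝ))) := by
    exact integral_sub_right_eq_self
      (fun x => Real.exp (-x^2 / (2*(u:ℝ))) * Real.exp (-((z-a-b) - x)^2 / (2*(w:ℝ)))) a
  rw [h2, aux_exp_conv hu' hw', ← mul_assoc, aux_const_id hu' hw']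
  push_cast
  congr 2
  ring

lemma aux_pdf_bound (b : ℝ) (w : ℝ≥0) (y : ℝ) :
    ‖gaussianPDFReal b w y‖ ≤ (Real.sqrt (2*π*w))⁻¹ := by
  rw [Real.norm_of_nonneg (gaussianPDFReal_nonneg _ _ _), gaussianPDFReal]
  have h1 : Real.exp (-(y-b)^2 / (2*w)) ≤ 1 := by
    rw [Real.exp_le_one_iff]
    apply div_nonpos_of_nonpos_of_nonneg
    · simp [sq_nonneg]
    · positivity
  calc (Real.sqrt (2*π*w))⁻¹ * Real.exp (-(y-b)^2 / (2*w))
      ≤ (Real.sqrt (2*π*w))⁻¹ * 1 := by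
        apply mul_le_mul_of_nonneg_left h1 (by positivity)
    _ = _ := by ring

lemma aux_integrable_pdf_mul (a b : ℝ) (u w : ℝ≥0) (z : ℝ) :
    Integrable (fun x => gaussianPDFReal a u x * gaussianPDFReal b w (z - x)) := by
  have h := Integrable.bdd_mul (integrable_gaussianPDFReal a u)
    ((measurable_gaussianPDFReal b w).comp (measurable_const.sub measurable_id)).aestronglyMeasurable
    (c := (Real.sqrt (2*π*w))⁻¹) (ae_of_all _ fun x => aux_pdf_bound b w (z - x))
  simpa [mul_comm] using h

lemma aux_gaussianReal_conv (a b : ℝ) (u w : ℝ≥0) :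
    Measure.map (fun p : ℝ × ℝ => p.1 + p.2) ((gaussianReal a u).prod (gaussianReal b w))
      = gaussianReal (a+b) (u+w) := by
  by_cases hu : u = 0
  · subst hu
    rw [gaussianReal_zero_var, Measure.dirac_prod,
      Measure.map_map measurable_add measurable_prodMk_left]
    have h : ((fun p : ℝ × ℝ => p.1 + p.2) ∘ (Prod.mk a)) = (a + ·) := rfl
    rw [h, gaussianReal_map_const_add, add_comm b a, zero_add]
  by_cases hw : w = 0
  · subst hw
    rw [gaussianReal_zero_var, Measure.prod_dirac,
      Measure.map_map measurable_add measurable_prodMk_right]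
    have h : ((fun p : ℝ × ℝ => p.1 + p.2) ∘ (fun x => (x, b))) = (· + b) := rfl
    rw [h, gaussianReal_map_add_const, add_zero]
  -- main case
  have huw : u + w ≠ 0 := by
    intro h
    exact hu (by simpa using (add_eq_zero.mp h).1)
  set f : ℝ → ℝ≥0∞ := gaussianPDF a u with hf
  set g : ℝ → ℝ≥0∞ := gaussianPDF b w with hg
  ext s hs
  rw [Measure.map_apply measurable_add hs,
    gaussianReal_of_var_ne_zero a hu, gaussianReal_of_var_ne_zero b hw,
    gaussianReal_of_var_ne_zero (a+b) huw,
    Measure.prod_apply (measurable_add hs)]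
  have hA : ∀ x : ℝ, MeasurableSet ((fun y => x + y) ⁻¹' s) :=
    fun x => (measurable_const_add x) hs
  have hImeas : Measurable (s.indicator (fun _ => (1:ℝ≥0∞))) :=
    measurable_const.indicator hs
  have step1 : ∀ x : ℝ,
      (volume.withDensity g) (Prod.mk x ⁻¹' ((fun p : ℝ × ℝ => p.1 + p.2) ⁻¹' s))
      = ∫⁻ y, g y * s.indicator (fun _ => (1:ℝ≥0∞)) (x + y) := by
    intro x
    have : (Prod.mk x ⁻¹' ((fun p : ℝ × ℝ => p.1 + p.2) ⁻¹' s)) = (fun y => x + y) ⁻¹' s := rfl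
    rw [this, withDensity_apply _ (hA x), ← lintegral_indicator (hA x)]
    congr 1
    funext y
    by_cases h : x + y ∈ s <;> simp [Set.indicator, h]
  simp_rw [← hf, ← hg, step1]
  have hgmeas : Measurable g := measurable_gaussianPDF b w
  have hfmeas : Measurable f := measurable_gaussianPDF a u
  have hGmeas : Measurable (fun x => ∫⁻ y, g y * s.indicator (fun _ => (1:ℝ≥0∞)) (x + y)) := by
    apply Measurable.lintegral_prod_right
    exact (hgmeas.comp measurable_snd).mul (hImeas.comp measurable_add)
  rw [lintegral_withDensity_eq_lintegral_mul _ hfmeas hGmeas]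
  have step2 : ∀ x : ℝ, (f * fun x => ∫⁻ y, g y * s.indicator (fun _ => (1:ℝ≥0∞)) (x + y)) x
      = ∫⁻ z, f x * g (z - x) * s.indicator (fun _ => (1:ℝ≥0∞)) z := by
    intro x
    have hsub : (∫⁻ y, g y * s.indicator (fun _ => (1:ℝ≥0∞)) (x + y))
        = ∫⁻ z, g (z - x) * s.indicator (fun _ => (1:ℝ≥0∞)) z := by
      rw [← lintegral_add_right_eq_self
        (fun z => g (z - x) * s.indicator (fun _ => (1:ℝ≥0∞)) z) x]
      congr 1
      funext y
      simp [add_comm]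
    rw [Pi.mul_apply, hsub, ← lintegral_const_mul' (f x) _
      (by rw [hf]; unfold gaussianPDF; exact ENNReal.ofReal_ne_top)]
    congr 1
    funext z
    ring
  simp_rw [step2]
  rw [lintegral_lintegral_swap]
  swap
  · apply Measurable.aemeasurable
    exact (((hfmeas.comp measurable_fst).mul
      (hgmeas.comp (measurable_snd.sub measurable_fst))).mul
      (hImeas.comp measurable_snd))
  have step3 : ∀ z : ℝ, (∫⁻ x, f x * g (z - x) * s.indicator (fun _ => (1:ℝ≥0∞)) z)
      = gaussianPDF (a+b) (u+w) z * s.indicator (fun _ => (1:ℝ≥0∞)) z := by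
    intro z
    rw [lintegral_mul_const' _ _
      (by by_cases h : z ∈ s <;> simp [Set.indicator, h])]
    congr 1
    have hpt : ∀ x : ℝ, f x * g (z - x)
        = ENNReal.ofReal (gaussianPDFReal a u x * gaussianPDFReal b w (z - x)) := by
      intro x
      rw [hf, hg]
      unfold gaussianPDF
      exact (ENNReal.ofReal_mul (gaussianPDFReal_nonneg a u x)).symm
    simp_rw [hpt]
    rw [← ofReal_integral_eq_lintegral_ofReal (aux_integrable_pdf_mul a b u w z)
      (ae_of_all _ (fun x => mul_nonneg (gaussianPDFReal_nonneg _ _ _)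
        (gaussianPDFReal_nonneg _ _ _)))]
    rw [aux_pdf_conv a b hu hw z]
    rfl
  simp_rw [step3]
  rw [withDensity_apply _ hs, ← lintegral_indicator hs]
  congr 1
  funext z
  by_cases h : z ∈ s <;> simp [Set.indicator, h]

lemma aux_map_add {Ω : Type*} {mΩ : MeasurableSpace Ω} {μ : Measure Ω} [IsFiniteMeasure μ]
    {X Y : Ω → ℝ} {a b : ℝ} {u w : ℝ≥0}
    (h : IndepFun X Y μ) (hX : AEMeasurable X μ) (hY : AEMeasurable Y μ)
    (hX' : Measure.map X μ = gaussianReal a u) (hY' : Measure.map Y μ = gaussianReal b w) :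
    Measure.map (fun ω => X ω + Y ω) μ = gaussianReal (a+b) (u+w) := by
  have hmap : μ.map (fun ω => (X ω, Y ω)) = (μ.map X).prod (μ.map Y) :=
    (indepFun_iff_map_prod_eq_prod_map_map hX hY).mp h
  have hcomp : (fun ω => X ω + Y ω)
      = (fun p : ℝ × ℝ => p.1 + p.2) ∘ (fun ω => (X ω, Y ω)) := rfl
  rw [hcomp, ← AEMeasurable.map_map_of_aemeasurable measurable_add.aemeasurable (hX.prodMk hY),
    hmap, hX', hY', aux_gaussianReal_conv]

lemma aux_map_mul_const {Ω : Type*} {mΩ : MeasurableSpace Ω} {μ : Measure Ω}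
    {X : Ω → ℝ} {a : ℝ} {u : ℝ≥0}
    (hX : Measure.map X μ = gaussianReal a u) (c : ℝ) :
    Measure.map (fun ω => X ω * c) μ = gaussianReal (c*a) (⟨c^2, sq_nonneg c⟩ * u) := by
  have hXm : AEMeasurable X μ := aemeasurable_of_map_neZero (by rw [hX]; infer_instance)
  have hcomp : (fun ω => X ω * c) = (· * c) ∘ X := rfl
  rw [hcomp, ← AEMeasurable.map_map_of_aemeasurable (measurable_mul_const c).aemeasurable hXm,
    hX, gaussianReal_map_mul_const]
  rfl

lemma aux_iIndepFun_congr {Ω : Type*} {mΩ : MeasurableSpace Ω} {μ : Measure Ω} {ι : Type*}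
    [Countable ι] {f g : ι → Ω → ℝ} (h : iIndepFun f μ)
    (hfg : ∀ i, f i =ᵐ[μ] g i) : iIndepFun g μ := by
  rw [iIndepFun_iff_measure_inter_preimage_eq_mul] at h ⊢
  intro S sets hsets
  have hae : ∀ᵐ ω ∂μ, ∀ i, f i ω = g i ω := ae_all_iff.mpr hfg
  have h1 : μ (⋂ i ∈ S, g i ⁻¹' sets i) = μ (⋂ i ∈ S, f i ⁻¹' sets i) := by
    apply measure_congr
    filter_upwards [hae] with ω hω
    show (ω ∈ (⋂ i ∈ S, g i ⁻¹' sets i)) = (ω ∈ (⋂ i ∈ S, f i ⁻¹' sets i))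
    simp only [Set.mem_iInter, Set.mem_preimage, eq_iff_iff, hω]
  have h2 : ∀ i ∈ S, μ (g i ⁻¹' sets i) = μ (f i ⁻¹' sets i) := by
    intro i _
    apply measure_congr
    filter_upwards [hfg i] with ω hω
    show (ω ∈ g i ⁻¹' sets i) = (ω ∈ f i ⁻¹' sets i)
    simp only [Set.mem_preimage, eq_iff_iff, hω]
  rw [h1, h S hsets]
  exact (Finset.prod_congr rfl h2).symm

lemma aux_integral_gaussian_density {vv : ℝ≥0} (hvv : vv ≠ 0) (g : ℝ → ℝ) :
    ∫ x, g x ∂(gaussianReal 0 vv) = ∫ x, gaussianPDFReal 0 vv x * g x := by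
  rw [gaussianReal_of_var_ne_zero 0 hvv]
  have hd : (gaussianPDF 0 vv)
      = fun x => ((Real.toNNReal (gaussianPDFReal 0 vv x) : ℝ≥0) : ℝ≥0∞) := rfl
  rw [hd, integral_withDensity_eq_integral_smul
    (measurable_gaussianPDFReal 0 vv).real_toNNReal g]
  congr 1
  funext x
  rw [NNReal.smul_def, Real.coe_toNNReal _ (gaussianPDFReal_nonneg 0 vv x), smul_eq_mul]

lemma aux_integrable_gaussian_density {vv : ℝ≥0} (hvv : vv ≠ 0) (g : ℝ → ℝ) :
    Integrable g (gaussianReal 0 vv)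
      ↔ Integrable (fun x => g x * gaussianPDFReal 0 vv x) := by
  rw [gaussianReal_of_var_ne_zero 0 hvv]
  rw [integrable_withDensity_iff (measurable_gaussianPDF 0 vv)
    (ae_of_all _ (fun x => ENNReal.ofReal_lt_top))]
  constructor <;> intro h <;> refine h.congr ?_ <;> filter_upwards with x <;>
    simp [gaussianPDF, ENNReal.toReal_ofReal (gaussianPDFReal_nonneg 0 vv x)]

lemma aux_sqrt_alg {A B : ℝ} (hA : 0 < A) (hB : 0 < B) :
    (Real.sqrt (B * A))⁻¹ * A = Real.sqrt (A / B) := by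
  rw [Real.sqrt_mul hB.le, Real.sqrt_div hA.le, mul_inv,
    eq_div_iff (by positivity : Real.sqrt B ≠ 0)]
  have h1 : Real.sqrt A * Real.sqrt A = A := Real.mul_self_sqrt hA.le
  have h2 : Real.sqrt A ≠ 0 := by positivity
  have h3 : Real.sqrt B ≠ 0 := by positivity
  field_simp
  linear_combination (-1) * h1

lemma aux_gaussian_relu_mean (vv : ℝ≥0) :
    ∫ x, max x 0 ∂(gaussianReal 0 vv) = Real.sqrt (vv / (2*π)) := by
  by_cases hvv : vv = 0
  · subst hvv
    rw [gaussianReal_zero_var]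
    simp [integral_dirac]
  · have hv' : (0:ℝ) < vv := lt_of_le_of_ne vv.coe_nonneg (by exact_mod_cast (Ne.symm hvv))
    rw [aux_integral_gaussian_density hvv]
    have hfun : (fun x => gaussianPDFReal 0 vv x * max x 0)
        = Set.indicator (Ioi (0:ℝ))
            (fun x => (Real.sqrt (2*π*vv))⁻¹ * (x * Real.exp (-((2*(vv:ℝ))⁻¹) * x^2))) := by
      funext x
      rcases le_or_gt x 0 with h|h
      · rw [Set.indicator_of_notMem (by simpa using h), max_eq_right h, mul_zero]
      · rw [Set.indicator_of_mem (show x ∈ Ioi 0 from h), max_eq_left h.le,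
          gaussianPDFReal, sub_zero]
        have hexp : -x^2 / (2*(vv:ℝ)) = -((2*(vv:ℝ))⁻¹) * x^2 := by
          rw [neg_div, div_eq_mul_inv]; ring
        rw [hexp]; ring
    rw [hfun, integral_indicator measurableSet_Ioi, integral_const_mul,
      aux_integral_Ioi_mul_exp (by positivity)]
    have h2 : ((2:ℝ) * (2*(vv:ℝ))⁻¹)⁻¹ = vv := by
      rw [mul_inv, inv_inv]; field_simp
    rw [h2]
    exact aux_sqrt_alg hv' (by positivity)

lemma aux_gaussian_sq_integrable_one :
    Integrable (fun x => x^2) (gaussianReal 0 1) := by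
  rw [aux_integrable_gaussian_density one_ne_zero]
  have h : Integrable (fun x : ℝ => (Real.sqrt (2*π*(1:ℝ≥0)))⁻¹ *
      (x ^ (((2:ℕ)):ℝ) * Real.exp (-((2*((1:ℝ≥0):ℝ))⁻¹) * x^2))) :=
    (integrable_rpow_mul_exp_neg_mul_sq (by norm_num) (by norm_num)).const_mul _
  refine h.congr ?_
  filter_upwards with x
  rw [gaussianPDFReal, sub_zero]
  have hexp : -x^2 / (2*((1:ℝ≥0):ℝ)) = -((2*((1:ℝ≥0):ℝ))⁻¹) * x^2 := by
    rw [neg_div, div_eq_mul_inv]; ring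
  rw [Real.rpow_natCast x 2, hexp]
  ring

lemma aux_gaussian_scale (vv : ℝ≥0) :
    gaussianReal 0 vv = Measure.map (· * Real.sqrt vv) (gaussianReal 0 1) := by
  have h : (NNReal.mk ((Real.sqrt vv)^2) (sq_nonneg _) : ℝ≥0) = vv := by
    ext; simp [Real.sq_sqrt vv.coe_nonneg]
  rw [gaussianReal_map_mul_const, mul_zero, h, mul_one]

lemma aux_gaussian_sq_integrable (vv : ℝ≥0) :
    Integrable (fun x : ℝ => x^2) (gaussianReal 0 vv) := by
  rw [aux_gaussian_scale vv, integrable_map_measure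
    (continuous_pow 2).measurable.aestronglyMeasurable (measurable_mul_const _).aemeasurable]
  have h : ((fun x : ℝ => x^2) ∘ (· * Real.sqrt vv))
      = fun x : ℝ => (Real.sqrt vv)^2 * x^2 := by
    funext x; show (x * Real.sqrt vv)^2 = _; ring
  rw [h]
  exact aux_gaussian_sq_integrable_one.const_mul _

lemma aux_gaussian_sq_moment (vv : ℝ≥0) :
    ∫ x, x^2 ∂(gaussianReal 0 vv) = (vv:ℝ) * ∫ x, x^2 ∂(gaussianReal 0 1) := by
  rw [aux_gaussian_scale vv, integral_map (measurable_mul_const _).aemeasurable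
    (continuous_pow 2).measurable.aestronglyMeasurable]
  have h : (fun x : ℝ => (x * Real.sqrt vv)^2) = fun x : ℝ => (Real.sqrt vv)^2 * x^2 := by
    funext x; ring
  show ∫ x, (x * Real.sqrt vv)^2 ∂(gaussianReal 0 1) = _
  rw [h, integral_const_mul, Real.sq_sqrt vv.coe_nonneg]

lemma aux_relu_sq_le_sq : ∀ x : ℝ, (max x 0)^2 ≤ x^2 := by
  intro x
  rcases le_or_gt 0 x with h|h
  · rw [max_eq_left h]
  · rw [max_eq_right h.le]
    simpa using sq_nonneg x

lemma aux_relu_sq_integrable (vv : ℝ≥0) :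
    Integrable (fun x : ℝ => (max x 0)^2) (gaussianReal 0 vv) := by
  refine (aux_gaussian_sq_integrable vv).mono
    ((measurable_id.max measurable_const).pow_const 2).aestronglyMeasurable
    (ae_of_all _ fun x => ?_)
  rw [Real.norm_eq_abs, Real.norm_eq_abs, abs_of_nonneg (by positivity : (0:ℝ) ≤ (max x 0)^2),
    abs_of_nonneg (sq_nonneg x)]
  exact aux_relu_sq_le_sq x

lemma aux_relu_sq_moment_le (vv : ℝ≥0) :
    ∫ x, (max x 0)^2 ∂(gaussianReal 0 vv)
      ≤ (vv:ℝ) * ∫ x, x^2 ∂(gaussianReal 0 1) := by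
  rw [← aux_gaussian_sq_moment]
  exact integral_mono (aux_relu_sq_integrable vv) (aux_gaussian_sq_integrable vv)
    aux_relu_sq_le_sq

set_option maxHeartbeats 1000000 in
/-- Single-layer version of Corollary 1: with `f_m(p) = Σᵢ √(π/m) · ReLU(Wᵢ·(p - t̄)) - r̄`,
where the `m × 3` matrix `W` has i.i.d. `N(0, 2/m)` entries (this is
`wᵀ ν(W p + b) + c` with `w = √(π/m)·𝟙`, `b = -W t̄`, `c = -r̄`), the output converges in
probability to `‖p - t̄‖ - r̄` as `m → ∞`, for each fixed `p`. -/
theorem stmt_7 {Ω : Type*} [MeasureSpace Ω] (μ : Measure Ω) [IsProbabilityMeasure μ]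
    (t : EuclideanSpace ℝ (Fin 3)) (r : ℝ) (hr : 0 < r)
    (p : EuclideanSpace ℝ (Fin 3))
    (W : (m : ℕ) → Ω → Fin m → Fin 3 → ℝ)
    (hindep : ∀ m : ℕ, 1 ≤ m →
      iIndepFun (fun ij : Fin m × Fin 3 => fun ω => W m ω ij.1 ij.2) μ)
    (hgauss : ∀ m : ℕ, 1 ≤ m → ∀ (i : Fin m) (j : Fin 3),
      Measure.map (fun ω => W m ω i j) μ = gaussianReal 0 (2 / m : NNReal))
    (f : (m : ℕ) → Ω → ℝ)
    (hf : ∀ m (ω : Ω), f m ω =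
      (∑ i : Fin m, Real.sqrt (Real.pi / m) * max (∑ j : Fin 3, W m ω i j * (p j - t j)) 0) - r) :
    ∀ ε > (0 : ℝ), Tendsto (fun m => μ {ω | ε ≤ |f m ω - (‖p - t‖ - r)|})
      atTop (nhds 0) := by
  intro ε hε
  set v : Fin 3 → ℝ := fun j => p j - t j with hv
  set nv2 : ℝ := ∑ j : Fin 3, (v j)^2 with hnv2def
  have hnv2nonneg : 0 ≤ nv2 := Finset.sum_nonneg (fun j _ => sq_nonneg _)
  have hnorm : ‖p - t‖ = Real.sqrt nv2 := by
    rw [EuclideanSpace.norm_eq]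
    congr 1
    apply Finset.sum_congr rfl
    intro j _
    rw [Real.norm_eq_abs, sq_abs]
    congr 1
  by_cases hnv2 : nv2 = 0
  · -- degenerate case : p = t
    have hveq : ∀ j, v j = 0 := by
      intro j
      have hsum : ∑ j : Fin 3, (v j)^2 = 0 := by rw [← hnv2def]; exact hnv2
      have h2 := (Finset.sum_eq_zero_iff_of_nonneg (fun j _ => sq_nonneg (v j))).mp hsum
      exact pow_eq_zero_iff two_ne_zero |>.mp (h2 j (Finset.mem_univ j))
    have hempty : ∀ m : ℕ, {ω | ε ≤ |f m ω - (‖p - t‖ - r)|} = (∅ : Set Ω) := by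
      intro m
      ext ω
      simp only [Set.mem_setOf_eq, Set.mem_empty_iff_false, iff_false, not_le]
      have hfval : f m ω = -r := by
        rw [hf]
        have : ∀ i : Fin m, Real.sqrt (Real.pi / m)
            * max (∑ j : Fin 3, W m ω i j * (p j - t j)) 0 = 0 := by
          intro i
          have hz : (∑ j : Fin 3, W m ω i j * (p j - t j)) = 0 := by
            apply Finset.sum_eq_zero
            intro j _
            have : p j - t j = 0 := hveq j
            rw [this, mul_zero]
          rw [hz, max_self, mul_zero]
        rw [Finset.sum_congr rfl (fun i _ => this i), Finset.sum_const, smul_zero, zero_sub]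
      rw [hfval, hnorm, hnv2, Real.sqrt_zero]
      simpa using hε
    have : (fun m => μ {ω | ε ≤ |f m ω - (‖p - t‖ - r)|}) = fun _ => 0 := by
      funext m; rw [hempty m, measure_empty]
    rw [this]
    exact tendsto_const_nhds
  · have h0nv2 : 0 < nv2 := lt_of_le_of_ne hnv2nonneg (Ne.symm hnv2)
    have hπ := Real.pi_pos
    set C : ℝ := ∫ x, x^2 ∂(gaussianReal 0 1) with hCdef
    have hC0 : 0 ≤ C := integral_nonneg (fun x => sq_nonneg x)
    set K : ℝ := 2*π*nv2*C/ε^2 with hKdef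
    have main : ∀ m : ℕ, 1 ≤ m →
        μ {ω | ε ≤ |f m ω - (‖p - t‖ - r)|} ≤ ENNReal.ofReal (K / m) := by
      intro m hm
      have hm0 : (0:ℝ) < m := by exact_mod_cast hm
      -- measurable representatives
      have hae : ∀ (i : Fin m) (j : Fin 3), AEMeasurable (fun ω => W m ω i j) μ := fun i j =>
        aemeasurable_of_map_neZero (by rw [hgauss m hm i j]; infer_instance)
      set V : Fin m → Fin 3 → Ω → ℝ := fun i j => (hae i j).mk _ with hVdef
      have hVmeas : ∀ i j, Measurable (V i j) := fun i j => (hae i j).measurable_mk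
      have hVae : ∀ i j, (fun ω => W m ω i j) =ᵐ[μ] V i j := fun i j => (hae i j).ae_eq_mk
      have hVgauss : ∀ i j, Measure.map (V i j) μ = gaussianReal 0 (2/m : ℝ≥0) := by
        intro i j
        rw [← Measure.map_congr (hVae i j)]
        exact hgauss m hm i j
      -- the scaled entries
      set Z : Fin m × Fin 3 → Ω → ℝ := fun ij ω => V ij.1 ij.2 ω * v ij.2 with hZdef
      have hZmeas : ∀ ij, Measurable (Z ij) := fun ij => (hVmeas _ _).mul_const _
      have hZindep : iIndepFun Z μ := by
        have h1 : iIndepFun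
            (fun ij : Fin m × Fin 3 => V ij.1 ij.2) μ :=
          aux_iIndepFun_congr (hindep m hm) (fun ij => hVae ij.1 ij.2)
        exact h1.comp (fun ij => (· * v ij.2)) (fun ij => measurable_mul_const _)
      set w2 : Fin 3 → ℝ≥0 := fun j => ⟨(v j)^2, sq_nonneg _⟩ * (2/m : ℝ≥0) with hw2def
      have hZgauss : ∀ ij, Measure.map (Z ij) μ = gaussianReal 0 (w2 ij.2) := by
        intro ij
        have h := aux_map_mul_const (hVgauss ij.1 ij.2) (v ij.2)
        rwa [mul_zero] at h
      -- the row sums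
      set Y : Fin m → Ω → ℝ := fun i ω => ∑ j : Fin 3, Z (i, j) ω with hYdef
      have hYmeas : ∀ i, Measurable (Y i) :=
        fun i => Finset.measurable_sum _ (fun j _ => hZmeas (i,j))
      set vY : ℝ≥0 := w2 0 + w2 1 + w2 2 with hvYdef
      have hYgauss : ∀ i, Measure.map (Y i) μ = gaussianReal 0 vY := by
        intro i
        have h01 : IndepFun (Z (i,0)) (Z (i,1)) μ :=
          hZindep.indepFun (by simp [Prod.ext_iff])
        have hmap01 : Measure.map (fun ω => Z (i,0) ω + Z (i,1) ω) μ
            = gaussianReal 0 (w2 0 + w2 1) := by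
          have h := aux_map_add h01 (hZmeas _).aemeasurable (hZmeas _).aemeasurable
            (hZgauss (i,0)) (hZgauss (i,1))
          rwa [add_zero] at h
        have hpairne : ((i,(0:Fin 3)) : Fin m × Fin 3) ≠ (i,1) := by simp [Prod.ext_iff]
        have h2 : IndepFun (fun ω => Z (i,0) ω + Z (i,1) ω) (Z (i,2)) μ := by
          have hnotmem : ((i,(2:Fin 3)) : Fin m × Fin 3) ∉
              ({(i,0), (i,1)} : Finset (Fin m × Fin 3)) := by
            simp [Prod.ext_iff]
          have hsum := hZindep.indepFun_finsetSum_of_notMem hZmeas hnotmem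
          rw [Finset.sum_pair hpairne] at hsum
          exact hsum
        have hmap := aux_map_add h2 ((hZmeas (i,0)).add (hZmeas (i,1))).aemeasurable
          (hZmeas (i,2)).aemeasurable hmap01 (hZgauss (i,2))
        rw [add_zero] at hmap
        have hYeq : Y i = fun ω => (Z (i,0) ω + Z (i,1) ω) + Z (i,2) ω := by
          funext ω
          rw [hYdef]
          exact Fin.sum_univ_three _
        rw [hYeq]
        exact hmap
      have hvY : (vY:ℝ) = 2 * nv2 / m := by
        have h3 : nv2 = (v 0)^2 + (v 1)^2 + (v 2)^2 := by
          rw [hnv2def]; exact Fin.sum_univ_three _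
        rw [hvYdef]
        have hw : ∀ j, (w2 j : ℝ) = (v j)^2 * (2/m) := fun j => by
          rw [hw2def]
          show (v j)^2 * ((2/(m:ℝ≥0) : ℝ≥0) : ℝ) = _
          norm_num
        push_cast [hw]
        rw [h3]
        field_simp
      -- the summands
      set φ : ℝ → ℝ := fun x => Real.sqrt (π/m) * max x 0 with hφdef
      have hφm : Measurable φ := (measurable_id.max measurable_const).const_mul _
      set T : Fin m → Ω → ℝ := fun i ω => φ (Y i ω) with hTdef
      have hTmeas : ∀ i, Measurable (T i) := fun i => hφm.comp (hYmeas i)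
      have hTmem : ∀ i, MemLp (T i) 2 μ := by
        intro i
        have h1 : MemLp φ 2 (Measure.map (Y i) μ) := by
          rw [hYgauss i, memLp_two_iff_integrable_sq hφm.aestronglyMeasurable]
          have h2 : (fun x => φ x ^ 2)
              = fun x => (Real.sqrt (π/m))^2 * (max x 0)^2 := by
            funext x; rw [hφdef]; ring
          rw [h2]
          exact (aux_relu_sq_integrable vY).const_mul _
        exact (memLp_map_measure_iff hφm.aestronglyMeasurable (hYmeas i).aemeasurable).mp h1
      have hTmean : ∀ i, ∫ ω, T i ω ∂μ = Real.sqrt nv2 / m := by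
        intro i
        have h1 : ∫ ω, T i ω ∂μ = ∫ x, φ x ∂(Measure.map (Y i) μ) :=
          (integral_map (hYmeas i).aemeasurable hφm.aestronglyMeasurable).symm
        rw [h1, hYgauss i]
        have h2 : ∫ x, φ x ∂(gaussianReal 0 vY)
            = Real.sqrt (π/m) * Real.sqrt ((vY:ℝ)/(2*π)) := by
          rw [hφdef, integral_const_mul, aux_gaussian_relu_mean vY]
        rw [h2, hvY, ← Real.sqrt_mul (by positivity)]
        have h3 : π/m * (2*nv2/m/(2*π)) = nv2/(m:ℝ)^2 := by
          field_simp
        rw [h3, Real.sqrt_div hnv2nonneg, Real.sqrt_sq hm0.le]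
      have hTvar : ∀ i, variance (T i) μ ≤ (π/m) * ((2*nv2/m) * C) := by
        intro i
        refine le_trans (variance_le_expectation_sq (hTmeas i).aestronglyMeasurable) ?_
        have h1 : μ[(T i)^2] = ∫ x, (φ x)^2 ∂(gaussianReal 0 vY) := by
          rw [← hYgauss i, integral_map (hYmeas i).aemeasurable
            (hφm.pow_const 2).aestronglyMeasurable]
          rfl
        rw [h1]
        have h2 : (fun x => (φ x)^2) = fun x => (π/m) * (max x 0)^2 := by
          funext x
          rw [hφdef, mul_pow, Real.sq_sqrt (by positivity : (0:ℝ) ≤ π/m)]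
        rw [h2, integral_const_mul]
        have h3 := aux_relu_sq_moment_le vY
        rw [← hCdef] at h3
        rw [hvY] at h3
        exact mul_le_mul_of_nonneg_left h3 (by positivity)
      have hTindep : ∀ i k, i ≠ k → IndepFun (T i) (T k) μ := by
        intro i k hik
        have hd : Disjoint ({i} ×ˢ (Finset.univ : Finset (Fin 3)))
            ({k} ×ˢ (Finset.univ : Finset (Fin 3))) := by
          rw [Finset.disjoint_left]
          rintro ⟨a,b⟩ ha hb
          simp only [Finset.mem_product, Finset.mem_singleton] at ha hb
          exact hik (ha.1 ▸ hb.1 ▸ rfl)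
        have h1 := hZindep.indepFun_finset _ _ hd hZmeas
        have h2 := h1.comp
          (φ := fun (g : (x : {x // x ∈ ({i} ×ˢ (Finset.univ : Finset (Fin 3)))}) → ℝ)
            => ∑ x, g x)
          (ψ := fun (g : (x : {x // x ∈ ({k} ×ˢ (Finset.univ : Finset (Fin 3)))}) → ℝ)
            => ∑ x, g x)
          (Finset.measurable_sum _ (fun x _ => measurable_pi_apply x))
          (Finset.measurable_sum _ (fun x _ => measurable_pi_apply x))
        have hYi : ((fun (g : (x : {x // x ∈ ({i} ×ˢ (Finset.univ : Finset (Fin 3)))}) → ℝ)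
            => ∑ x, g x) ∘ (fun a (x : {x // x ∈ ({i} ×ˢ (Finset.univ : Finset (Fin 3)))})
              => Z x a)) = Y i := by
          funext a
          show (∑ x : {x // x ∈ ({i} ×ˢ (Finset.univ : Finset (Fin 3)))}, Z x.1 a) = Y i a
          rw [Finset.sum_coe_sort _ (fun ij => Z ij a), Finset.sum_product,
            Finset.sum_singleton]
        have hYk : ((fun (g : (x : {x // x ∈ ({k} ×ˢ (Finset.univ : Finset (Fin 3)))}) → ℝ)
            => ∑ x, g x) ∘ (fun a (x : {x // x ∈ ({k} ×ˢ (Finset.univ : Finset (Fin 3)))})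
              => Z x a)) = Y k := by
          funext a
          show (∑ x : {x // x ∈ ({k} ×ˢ (Finset.univ : Finset (Fin 3)))}, Z x.1 a) = Y k a
          rw [Finset.sum_coe_sort _ (fun ij => Z ij a), Finset.sum_product,
            Finset.sum_singleton]
        rw [hYi, hYk] at h2
        exact h2.comp hφm hφm
      -- sum and Chebyshev
      set SS : Ω → ℝ := ∑ i : Fin m, T i with hSSdef
      have hSmem : MemLp SS 2 μ := memLp_finsetSum' _ (fun i _ => hTmem i)
      have hSmean : μ[SS] = Real.sqrt nv2 := by
        have h1 : μ[SS] = ∑ i : Fin m, ∫ ω, T i ω ∂μ := by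
          rw [hSSdef]
          simp only [Finset.sum_apply]
          exact integral_finset_sum _ (fun i _ => (hTmem i).integrable one_le_two)
        rw [h1, Finset.sum_congr rfl (fun i _ => hTmean i), Finset.sum_const,
          Finset.card_univ, Fintype.card_fin, nsmul_eq_mul]
        field_simp
      have hSvar : variance SS μ ≤ 2*π*nv2*C/m := by
        rw [hSSdef, IndepFun.variance_sum (fun i _ => hTmem i)
          (fun i _ k _ hik => hTindep i k hik)]
        calc ∑ i : Fin m, variance (T i) μ
            ≤ ∑ _i : Fin m, (π/m) * ((2*nv2/m) * C) :=
              Finset.sum_le_sum (fun i _ => hTvar i)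
          _ = m * ((π/m) * ((2*nv2/m) * C)) := by
              rw [Finset.sum_const, Finset.card_univ, Fintype.card_fin, nsmul_eq_mul]
          _ = 2*π*nv2*C/m := by field_simp
      have hcheb := meas_ge_le_variance_div_sq (μ := μ) hSmem hε
      have hsets : μ {ω | ε ≤ |f m ω - (‖p - t‖ - r)|} = μ {ω | ε ≤ |SS ω - μ[SS]|} := by
        apply measure_congr
        have hWV : ∀ᵐ ω ∂μ, ∀ (i : Fin m) (j : Fin 3), W m ω i j = V i j ω :=
          ae_all_iff.mpr (fun i => ae_all_iff.mpr (fun j => hVae i j))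
        filter_upwards [hWV] with ω hω
        show (ω ∈ {ω | ε ≤ |f m ω - (‖p - t‖ - r)|}) = (ω ∈ {ω | ε ≤ |SS ω - μ[SS]|})
        simp only [Set.mem_setOf_eq, eq_iff_iff]
        have hfS : f m ω = SS ω - r := by
          rw [hf m ω, hSSdef]
          congr 1
          rw [Finset.sum_apply]
          apply Finset.sum_congr rfl
          intro i _
          rw [hTdef, hφdef]
          congr 2
          rw [hYdef, hZdef]
          apply Finset.sum_congr rfl
          intro j _
          rw [hω i j, hv]
        rw [hfS, hSmean, hnorm]
        have harith : SS ω - r - (Real.sqrt nv2 - r) = SS ω - Real.sqrt nv2 := by rw [sub_sub_sub_cancel_right]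
        rw [harith]
      rewrite [hsets]
      refine le_trans hcheb ?_
      apply ENNReal.ofReal_le_ofReal
      calc variance SS μ / ε^2 ≤ (2*π*nv2*C/m) / ε^2 := by gcongr
        _ = K / m := by rw [hKdef, div_right_comm]
    have hKtend : Tendsto (fun m : ℕ => ENNReal.ofReal (K / m)) atTop (nhds 0) := by
      have h1 : Tendsto (fun m : ℕ => K / (m:ℝ)) atTop (nhds 0) :=
        tendsto_const_div_atTop_nhds_zero_nat K
      have h2 := ENNReal.tendsto_ofReal h1
      rwa [ENNReal.ofReal_zero] at h2
    refine tendsto_of_tendsto_of_tendsto_of_le_of_le' tendsto_const_nhds hKtend ?_ ?_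
    · exact Filter.Eventually.of_forall (fun m => zero_le)
    · filter_upwards [eventually_ge_atTop 1] with m hm
      exact main m hm
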